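/- Let G be a group, Ω ≤ G a subgroup, and L ⊆ G a transversal of the left cosets G/Ω containing 1, with operation a ∘ b defined by ab ∈ (a ∘ b)Ω, a ∘ b ∈ L, making (L, ∘) a loop. If L generates G as a group and ωLω⁻¹ = L for the Ω-factors ω arising in products of elements of L, then the left multiplication group Mlt_ℓ(L, ∘) is a homomorphic image of G; in particular, if G is a simple group then Mlt_ℓ(L) ≅ G and (L, ∘) is a simple loop. -/

import Mathlib

/-- A loop: a binary operation with two-sided identity whose left and right
translations are bijections. -/
structure LoopStr (L : Type*) where
  mul : L → L → L
  one : L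
  one_mul : ∀ x, mul one x = x
  mul_one : ∀ x, mul x one = x
  mul_left_bij : ∀ x, Function.Bijective (mul x)
  mul_right_bij : ∀ x, Function.Bijective fun y => mul y x

/-- Left translation `λ_x` as a permutation. -/
noncomputable def LoopStr.lam {L : Type*} (S : LoopStr L) (x : L) : Equiv.Perm L :=
  Equiv.ofBijective _ (S.mul_left_bij x)

/-- Right translation `ρ_x` as a permutation. -/
noncomputable def LoopStr.rho {L : Type*} (S : LoopStr L) (x : L) : Equiv.Perm L :=
  Equiv.ofBijective _ (S.mul_right_bij x)

/-- The left multiplication group `Mlt_ℓ(L)`. -/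
noncomputable def LoopStr.Mlt {L : Type*} (S : LoopStr L) : Subgroup (Equiv.Perm L) :=
  Subgroup.closure (Set.range S.lam)

/-- Left division: `ldiv a b` is the unique solution `x` of `a·x = b`. -/
noncomputable def LoopStr.ldiv {L : Type*} (S : LoopStr L) (a b : L) : L := (S.lam a).symm b

/-- Right division: `rdiv a b` is the unique solution `x` of `x·b = a`. -/
noncomputable def LoopStr.rdiv {L : Type*} (S : LoopStr L) (a b : L) : L := (S.rho b).symm a

/-- The inner mapping `δ_{x,y} = λ_{xy}⁻¹ ∘ λ_x ∘ λ_y`. -/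
noncomputable def LoopStr.delta {L : Type*} (S : LoopStr L) (x y : L) : Equiv.Perm L :=
  (S.lam (S.mul x y))⁻¹ * S.lam x * S.lam y

/-- A loop homomorphism: preserves the multiplication and the identity. -/
def IsLoopHom {L L' : Type*} (S : LoopStr L) (S' : LoopStr L') (θ : L → L') : Prop :=
  θ S.one = S'.one ∧ ∀ x y, θ (S.mul x y) = S'.mul (θ x) (θ y)

/-- A subloop: a subset containing the identity, closed under multiplication
and both divisions. -/
def IsSubloop {L : Type*} (S : LoopStr L) (N : Set L) : Prop :=
  S.one ∈ N ∧ (∀ a ∈ N, ∀ b ∈ N, S.mul a b ∈ N) ∧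
    (∀ a ∈ N, ∀ b ∈ N, S.ldiv a b ∈ N) ∧ (∀ a ∈ N, ∀ b ∈ N, S.rdiv a b ∈ N)

/-- A normal subloop: `ab·N = a·(bN) = (aN)·b` for all `a, b`. -/
def IsNormalSubloop {L : Type*} (S : LoopStr L) (N : Set L) : Prop :=
  IsSubloop S N ∧ ∀ a b : L,
    ((fun n => S.mul (S.mul a b) n) '' N = (fun n => S.mul a (S.mul b n)) '' N) ∧
    ((fun n => S.mul (S.mul a b) n) '' N = (fun n => S.mul (S.mul a n) b) '' N)


section Aux

variable {G : Type*} [Group G] (Ω : Subgroup G) (Lset : Set G)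

/-- The action of `g ∈ G` on the transversal `Lset`: `actFn g x` is the unique
element of `Lset` representing the coset `g x Ω`. -/
noncomputable def actFn (htrans : ∀ g : G, ∃! a : G, a ∈ Lset ∧ ∃ ω ∈ Ω, g = a * ω)
    (g : G) (x : Lset) : Lset :=
  ⟨(htrans (g * x)).exists.choose, (htrans (g * x)).exists.choose_spec.1⟩

theorem actFn_spec (htrans : ∀ g : G, ∃! a : G, a ∈ Lset ∧ ∃ ω ∈ Ω, g = a * ω)
    (g : G) (x : Lset) : ∃ ω ∈ Ω, g * (x : G) = (actFn Ω Lset htrans g x : G) * ω :=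
  (htrans (g * x)).exists.choose_spec.2

theorem actFn_eq (htrans : ∀ g : G, ∃! a : G, a ∈ Lset ∧ ∃ ω ∈ Ω, g = a * ω)
    (g : G) (x : Lset) (b : G) (hb : b ∈ Lset) (h : ∃ ω ∈ Ω, g * (x : G) = b * ω) :
    (actFn Ω Lset htrans g x : G) = b :=
  (htrans (g * x)).unique ⟨(actFn Ω Lset htrans g x).2, actFn_spec Ω Lset htrans g x⟩ ⟨hb, h⟩

theorem actFn_one (htrans : ∀ g : G, ∃! a : G, a ∈ Lset ∧ ∃ ω ∈ Ω, g = a * ω)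
    (x : Lset) : actFn Ω Lset htrans 1 x = x := by
  apply Subtype.ext
  exact actFn_eq Ω Lset htrans 1 x x x.2 ⟨1, Ω.one_mem, by simp⟩

theorem actFn_mul (htrans : ∀ g : G, ∃! a : G, a ∈ Lset ∧ ∃ ω ∈ Ω, g = a * ω)
    (g h : G) (x : Lset) :
    actFn Ω Lset htrans (g * h) x = actFn Ω Lset htrans g (actFn Ω Lset htrans h x) := by
  apply Subtype.ext
  obtain ⟨ω₁, hω₁, e₁⟩ := actFn_spec Ω Lset htrans h x
  obtain ⟨ω₂, hω₂, e₂⟩ := actFn_spec Ω Lset htrans g (actFn Ω Lset htrans h x)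
  refine actFn_eq Ω Lset htrans (g * h) x _ (actFn Ω Lset htrans g (actFn Ω Lset htrans h x)).2
    ⟨ω₂ * ω₁, Ω.mul_mem hω₂ hω₁, ?_⟩
  calc g * h * (x : G) = g * (h * x) := by group
    _ = g * ((actFn Ω Lset htrans h x : G) * ω₁) := by rw [e₁]
    _ = (g * (actFn Ω Lset htrans h x : G)) * ω₁ := by group
    _ = ((actFn Ω Lset htrans g (actFn Ω Lset htrans h x) : G) * ω₂) * ω₁ := by rw [e₂]
    _ = _ := by group

/-- The action as a permutation. -/
noncomputable def permFn (htrans : ∀ g : G, ∃! a : G, a ∈ Lset ∧ ∃ ω ∈ Ω, g = a * ω)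
    (g : G) : Equiv.Perm Lset where
  toFun := actFn Ω Lset htrans g
  invFun := actFn Ω Lset htrans g⁻¹
  left_inv x := by
    rw [← actFn_mul, inv_mul_cancel, actFn_one]
  right_inv x := by
    rw [← actFn_mul, mul_inv_cancel, actFn_one]

/-- The action as a group homomorphism `G →* Perm Lset`. -/
noncomputable def permHom (htrans : ∀ g : G, ∃! a : G, a ∈ Lset ∧ ∃ ω ∈ Ω, g = a * ω) :
    G →* Equiv.Perm Lset where
  toFun := permFn Ω Lset htrans
  map_one' := by
    ext x; exact congrArg Subtype.val (actFn_one Ω Lset htrans x)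
  map_mul' g h := by
    ext x; exact congrArg Subtype.val (actFn_mul Ω Lset htrans g h x)

end Aux
/-- Let `Ω ≤ G`, and let `L ⊆ G` be a transversal of `G/Ω`
containing `1`, with loop operation `a ∘ b` determined by `ab ∈ (a ∘ b)Ω`.
If `L` generates `G` and conjugation by the `Ω`-factors arising in products of
elements of `L` preserves `L`, then `Mlt_ℓ(L, ∘)` is a homomorphic image of
`G`; in particular if `G` is simple then `Mlt_ℓ(L) ≅ G` and `(L, ∘)` is a
simple loop. -/
theorem stmt18 {G : Type*} [Group G] (Ω : Subgroup G) (Lset : Set G)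
    (h1 : (1 : G) ∈ Lset)
    (htrans : ∀ g : G, ∃! a : G, a ∈ Lset ∧ ∃ ω ∈ Ω, g = a * ω)
    (S : LoopStr ↥Lset) (hone : (S.one : G) = 1)
    (hmul : ∀ a b : ↥Lset, ∃ ω ∈ Ω, (a : G) * (b : G) = (S.mul a b : G) * ω)
    (hgen : Subgroup.closure Lset = ⊤)
    (hconj : ∀ a b : ↥Lset, ∀ ω ∈ Ω,
      (a : G) * (b : G) = (S.mul a b : G) * ω → ∀ x ∈ Lset, ω * x * ω⁻¹ ∈ Lset) :
    (∃ Φ : G →* ↥S.Mlt, Function.Surjective Φ) ∧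
    (IsSimpleGroup G →
      Nonempty (G ≃* ↥S.Mlt) ∧
      ∀ N : Set ↥Lset, IsNormalSubloop S N → N = {S.one} ∨ N = Set.univ) := by
  set act := actFn Ω Lset htrans with hact_def
  set φ := permHom Ω Lset htrans with hφ_def
  -- the action of an element of `Lset` is left translation in the loop
  have hlam : ∀ (a : ↥Lset) (x : ↥Lset), act (a : G) x = S.mul a x := by
    intro a x
    exact Subtype.ext (actFn_eq Ω Lset htrans (a : G) x _ (S.mul a x).2 (hmul a x))
  have hlamP : ∀ a : ↥Lset, φ (a : G) = S.lam a := by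
    intro a
    ext x
    exact congrArg Subtype.val (hlam a x)
  -- the range of φ is Mlt
  have himg : φ '' Lset = Set.range S.lam := by
    ext π
    constructor
    · rintro ⟨a, ha, rfl⟩
      exact ⟨⟨a, ha⟩, (hlamP ⟨a, ha⟩).symm⟩
    · rintro ⟨a, rfl⟩
      exact ⟨(a : G), a.2, hlamP a⟩
  have hrange : φ.range = S.Mlt := by
    rw [MonoidHom.range_eq_map, ← hgen, MonoidHom.map_closure, himg]
    rfl
  have hmem : ∀ g : G, φ g ∈ S.Mlt := by
    intro g
    rw [← hrange]
    exact ⟨g, rfl⟩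
  set Φ : G →* ↥S.Mlt := φ.codRestrict S.Mlt hmem with hΦ_def
  have hΦsurj : Function.Surjective Φ := by
    rintro ⟨π, hπ⟩
    rw [← hrange] at hπ
    obtain ⟨g, rfl⟩ := hπ
    exact ⟨g, rfl⟩
  refine ⟨⟨Φ, hΦsurj⟩, ?_⟩
  intro hs
  constructor
  · -- G ≃* Mlt
    have hker := hs.eq_bot_or_eq_top_of_normal Φ.ker inferInstance
    rcases hker with hker | hker
    · exact ⟨MulEquiv.ofBijective Φ ⟨(MonoidHom.ker_eq_bot_iff Φ).mp hker, hΦsurj⟩⟩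
    · exfalso
      -- every element of Lset acts trivially, so Lset = {1} and G is trivial
      have hL1 : ∀ a ∈ Lset, a = (1 : G) := by
        intro a ha
        have h1' : ((a : G)) ∈ Φ.ker := by rw [hker]; trivial
        have h2 : φ a = 1 := congrArg Subtype.val h1'
        have h3 : S.lam ⟨a, ha⟩ = 1 := by rw [← hlamP ⟨a, ha⟩]; exact h2
        have h4 : S.mul ⟨a, ha⟩ S.one = S.one := by
          have := congrArg (fun e : Equiv.Perm ↥Lset => e S.one) h3
          simpa [LoopStr.lam] using this
        have h5 : (⟨a, ha⟩ : ↥Lset) = S.one := by rw [← S.mul_one ⟨a, ha⟩, h4]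
        have := congrArg Subtype.val h5
        simpa [hone] using this
      have hbot : (⊤ : Subgroup G) = ⊥ := by
        rw [← hgen]
        rw [eq_bot_iff]
        apply (Subgroup.closure_le _).mpr
        intro a ha
        simp [hL1 a ha]
      obtain ⟨x, y, hxy⟩ := hs.exists_pair_ne
      apply hxy
      have hx : x ∈ (⊥ : Subgroup G) := by rw [← hbot]; trivial
      have hy : y ∈ (⊥ : Subgroup G) := by rw [← hbot]; trivial
      rw [Subgroup.mem_bot] at hx hy
      rw [hx, hy]
  · -- simple loop
    intro N hN
    classical
    have act_one : ∀ x, act (1 : G) x = x := actFn_one Ω Lset htrans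
    have act_mul : ∀ (g h : G) x, act (g * h) x = act g (act h x) := actFn_mul Ω Lset htrans
    set R : ↥Lset → ↥Lset → Prop := fun x y => ∃ n ∈ N, y = S.mul x n with hR_def
    have hNe : S.one ∈ N := hN.1.1
    have hmulN : ∀ a ∈ N, ∀ b ∈ N, S.mul a b ∈ N := hN.1.2.1
    have hldivN : ∀ a ∈ N, ∀ b ∈ N, S.ldiv a b ∈ N := hN.1.2.2.1
    have hRrefl : ∀ x, R x x := fun x => ⟨S.one, hNe, (S.mul_one x).symm⟩
    have norm1 : ∀ a b : ↥Lset, ∀ n ∈ N, ∃ m ∈ N, S.mul a (S.mul b n) = S.mul (S.mul a b) m := by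
      intro a b n hn
      have h := (hN.2 a b).1
      have hmem2 : S.mul a (S.mul b n) ∈ (fun n => S.mul (S.mul a b) n) '' N := by
        rw [h]; exact ⟨n, hn, rfl⟩
      obtain ⟨m, hm, hme⟩ := hmem2
      exact ⟨m, hm, hme.symm⟩
    have norm1' : ∀ a b : ↥Lset, ∀ m ∈ N, ∃ n ∈ N, S.mul (S.mul a b) m = S.mul a (S.mul b n) := by
      intro a b m hm
      have h := (hN.2 a b).1
      have hmem2 : S.mul (S.mul a b) m ∈ (fun n => S.mul a (S.mul b n)) '' N := by
        rw [← h]; exact ⟨m, hm, rfl⟩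
      obtain ⟨n, hn, hne⟩ := hmem2
      exact ⟨n, hn, hne.symm⟩
    have hRsymm : ∀ x y, R x y → R y x := by
      rintro x y ⟨n, hn, rfl⟩
      have hk : S.ldiv n S.one ∈ N := hldivN n hn S.one hNe
      have hnk : S.mul n (S.ldiv n S.one) = S.one := (S.lam n).apply_symm_apply S.one
      obtain ⟨m, hm, hme⟩ := norm1 x n (S.ldiv n S.one) hk
      refine ⟨m, hm, ?_⟩
      rw [← hme, hnk, S.mul_one]
    have hRtrans : ∀ x y z, R x y → R y z → R x z := by
      rintro x y z ⟨n, hn, rfl⟩ ⟨m, hm, rfl⟩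
      obtain ⟨k, hk, hke⟩ := norm1' x n m hm
      exact ⟨S.mul n k, hmulN n hn k hk, hke⟩
    have hlamR : ∀ (a x y : ↥Lset), R x y → R (S.mul a x) (S.mul a y) := by
      rintro a x y ⟨n, hn, rfl⟩
      obtain ⟨m, hm, hme⟩ := norm1 a x n hn
      exact ⟨m, hm, hme⟩
    have hlamR' : ∀ (a x y : ↥Lset), R (S.mul a x) (S.mul a y) → R x y := by
      rintro a x y ⟨m, hm, hme⟩
      obtain ⟨n, hn, hne⟩ := norm1' a x m hm
      refine ⟨n, hn, (S.mul_left_bij a).1 ?_⟩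
      rw [hme, hne]
    have hcomm : ∀ (x : ↥Lset), ∀ n ∈ N, R x (S.mul n x) := by
      intro x n hn
      have h := (hN.2 S.one x).2
      have h2 : S.mul (S.mul S.one n) x ∈ (fun m => S.mul (S.mul S.one x) m) '' N := by
        rw [h]; exact ⟨n, hn, rfl⟩
      obtain ⟨m, hm, hme⟩ := h2
      refine ⟨m, hm, ?_⟩
      simp only [S.one_mul] at hme
      exact hme.symm
    have hpres : ∀ g : G, ∀ x y, R x y ↔ R (act g x) (act g y) := by
      have key : ∀ g ∈ Subgroup.closure Lset, ∀ x y, R x y ↔ R (act g x) (act g y) := by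
        intro g hg
        induction hg using Subgroup.closure_induction with
        | mem a ha =>
          intro x y
          have hx : act a x = S.mul ⟨a, ha⟩ x := hlam ⟨a, ha⟩ x
          have hy : act a y = S.mul ⟨a, ha⟩ y := hlam ⟨a, ha⟩ y
          rw [hx, hy]
          exact ⟨hlamR _ x y, hlamR' _ x y⟩
        | one =>
          intro x y
          rw [act_one, act_one]
        | mul g h _ _ ihg ihh =>
          intro x y
          rw [act_mul, act_mul]
          exact (ihh x y).trans (ihg _ _)
        | inv g _ ih =>
          intro x y
          have e1 : act g (act g⁻¹ x) = x := by
            rw [← act_mul, mul_inv_cancel, act_one]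
          have e2 : act g (act g⁻¹ y) = y := by
            rw [← act_mul, mul_inv_cancel, act_one]
          have h3 := ih (act g⁻¹ x) (act g⁻¹ y)
          rw [e1, e2] at h3
          exact h3.symm
      intro g
      exact key g (by rw [hgen]; trivial)
    set K : Subgroup G :=
      { carrier := {g | ∀ x, R (act g x) x}
        one_mem' := by intro x; rw [act_one]; exact hRrefl x
        mul_mem' := by
          intro g h hg hh x
          rw [act_mul]
          exact hRtrans _ _ _ ((hpres g _ _).mp (hh x)) (hg x)
        inv_mem' := by
          intro g hg x
          have h3 := hg (act g⁻¹ x)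
          rw [← act_mul, mul_inv_cancel, act_one] at h3
          exact hRsymm _ _ h3 } with hK_def
    have hKnorm : K.Normal := by
      refine ⟨fun n hn τ => ?_⟩
      show ∀ x, R (act (τ * n * τ⁻¹) x) x
      intro x
      rw [act_mul, act_mul]
      have h1 := (hpres τ _ _).mp (hn (act τ⁻¹ x))
      have h2 : act τ (act τ⁻¹ x) = x := by rw [← act_mul, mul_inv_cancel, act_one]
      rw [h2] at h1
      exact h1
    rcases hs.eq_bot_or_eq_top_of_normal K hKnorm with hK | hK
    · left
      ext n
      simp only [Set.mem_singleton_iff]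
      constructor
      · intro hn
        have hnK : (n : G) ∈ K := by
          show ∀ x, R (act (n : G) x) x
          intro x
          rw [hlam n x]
          exact hRsymm _ _ (hcomm x n hn)
        rw [hK, Subgroup.mem_bot] at hnK
        apply Subtype.ext
        rw [hnK, hone]
      · rintro rfl; exact hNe
    · right
      ext a
      simp only [Set.mem_univ, iff_true]
      have haK : (a : G) ∈ K := by rw [hK]; trivial
      have h2 : ∀ x, R (act (a : G) x) x := haK
      have h3 := h2 S.one
      rw [hlam a S.one, S.mul_one] at h3
      obtain ⟨n, hn, hna⟩ := hRsymm _ _ h3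
      rw [S.one_mul] at hna
      rw [hna]
      exact hn
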